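/- Let p be prime and let A, B be nonempty subsets of ℤ/pℤ with |A| + |B| ≥ p + 1. Then there exists a function f: ℤ/pℤ → ℂ with supp(f) = A and supp(f̂) = B. -/

import Mathlib

open Finset Polynomial

-- distinct naturals sum lemma
lemma aux_distinct_sum (n : ℕ) : ∀ s : Finset ℕ, s.card = n →
    (∑ j ∈ Finset.range n, j ≤ ∑ x ∈ s, x ∧
      (∑ x ∈ s, x = ∑ j ∈ Finset.range n, j → s = Finset.range n)) := by
  induction n with
  | zero =>
    intro s hs
    rw [Finset.card_eq_zero] at hs
    simp [hs]
  | succ n ih =>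
    intro s hs
    have hne : s.Nonempty := by rw [← Finset.card_pos, hs]; omega
    set M := s.max' hne with hMdef
    have hMs : M ∈ s := s.max'_mem hne
    have hsub : s ⊆ Finset.range (M + 1) := fun x hx =>
      Finset.mem_range.2 (Nat.lt_succ_of_le (s.le_max' x hx))
    have hM : n ≤ M := by
      have := Finset.card_le_card hsub
      rw [hs, Finset.card_range] at this; omega
    have hcard' : (s.erase M).card = n := by
      rw [Finset.card_erase_of_mem hMs, hs]; omega
    obtain ⟨h1, h2⟩ := ih (s.erase M) hcard'
    have hsum : ∑ x ∈ s.erase M, x + M = ∑ x ∈ s, x := Finset.sum_erase_add s _ hMs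
    rw [Finset.sum_range_succ]
    constructor
    · omega
    · intro heq
      have hM' : M = n := by omega
      have hsum' : ∑ x ∈ s.erase M, x = ∑ j ∈ Finset.range n, j := by omega
      have := h2 hsum'
      have : s = insert M (s.erase M) := (Finset.insert_erase hMs).symm
      rw [this, h2 hsum', hM', Finset.range_add_one]
open Finset Polynomial Equiv

variable {n : ℕ} (A B : Fin n → ℕ)

noncomputable def eexp (σ : Equiv.Perm (Fin n)) : ℕ := ∑ i, A i * B (σ i)

noncomputable def Tsum (k : ℕ) : ℤ :=
  ∑ σ : Equiv.Perm (Fin n), (Equiv.Perm.sign σ : ℤ) * ((eexp A B σ : ℕ) : ℤ) ^ k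

lemma Tsum_eq (k : ℕ) : Tsum A B k =
    ∑ m ∈ Finset.piAntidiag Finset.univ k,
      (Nat.multinomial Finset.univ m : ℤ) * (∏ i, (A i : ℤ) ^ m i) *
        Matrix.det (Matrix.of fun (x j : Fin n) => (B x : ℤ) ^ m j) := by
  unfold Tsum eexp
  have expand : ∀ σ : Equiv.Perm (Fin n), ((∑ i, A i * B (σ i) : ℕ) : ℤ) ^ k =
      ∑ m ∈ Finset.piAntidiag Finset.univ k,
        (Nat.multinomial Finset.univ m : ℤ) * ((∏ i, (A i : ℤ) ^ m i) * ∏ i, (B (σ i) : ℤ) ^ m i) := by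
    intro σ
    push_cast
    rw [Finset.sum_pow_eq_sum_piAntidiag]
    refine Finset.sum_congr rfl fun m _ => ?_
    rw [← Finset.prod_mul_distrib]
    simp [mul_pow]
  simp_rw [expand, Finset.mul_sum, ]
  rw [Finset.sum_comm]
  refine Finset.sum_congr rfl fun m _ => ?_
  rw [Matrix.det_apply]
  simp_rw [Matrix.of_apply]
  rw [Finset.mul_sum]
  refine Finset.sum_congr rfl fun σ _ => ?_
  simp only [Units.smul_def, zsmul_eq_mul]
  push_cast
  ring

lemma sum_lb_of_injective {m : Fin n → ℕ} (hm : Function.Injective m) :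
    ∑ j ∈ Finset.range n, j ≤ ∑ i, m i := by
  have hcard : (Finset.image m Finset.univ).card = n := by
    rw [Finset.card_image_of_injective _ hm, Finset.card_univ, Fintype.card_fin]
  have := (aux_distinct_sum n (Finset.image m Finset.univ) hcard).1
  rwa [Finset.sum_image (fun a _ b _ h => hm h)] at this

lemma det_zero_of_noninj {m : Fin n → ℕ} (hm : ¬ Function.Injective m) :
    Matrix.det (Matrix.of fun (x j : Fin n) => (B x : ℤ) ^ m j) = 0 := by
  simp only [Function.Injective, not_forall] at hm
  obtain ⟨i, j, hij, hne⟩ := hm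
  exact Matrix.det_zero_of_column_eq hne (fun x => by simp [hij])

lemma Tsum_lt {k : ℕ} (hk : k < ∑ j ∈ Finset.range n, j) : Tsum A B k = 0 := by
  rw [Tsum_eq]
  refine Finset.sum_eq_zero fun m hm => ?_
  rw [Finset.mem_piAntidiag] at hm
  have hninj : ¬ Function.Injective m := by
    intro hinj
    have := sum_lb_of_injective hinj
    rw [hm.1] at this
    omega
  rw [det_zero_of_noninj B hninj, mul_zero]

lemma detperm (τ : Equiv.Perm (Fin n)) :
    Matrix.det (Matrix.of fun (x j : Fin n) => (B x : ℤ) ^ ((τ j : Fin n) : ℕ)) =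
      (Equiv.Perm.sign τ : ℤ) * ∏ i, ∏ j ∈ Finset.Ioi i, ((B j : ℤ) - (B i : ℤ)) := by
  have : (Matrix.of fun (x j : Fin n) => (B x : ℤ) ^ ((τ j : Fin n) : ℕ)) =
      (Matrix.vandermonde (fun x => (B x : ℤ))).submatrix id τ := rfl
  rw [this, Matrix.det_permute', Matrix.det_vandermonde]
  norm_cast

lemma multconst (τ : Equiv.Perm (Fin n)) :
    Nat.multinomial Finset.univ (fun i => ((τ i : Fin n) : ℕ)) =
      Nat.multinomial Finset.univ (fun i : Fin n => (i : ℕ)) := by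
  have hpos : 0 < ∏ i : Fin n, Nat.factorial (i : ℕ) :=
    Finset.prod_pos fun i _ => Nat.factorial_pos _
  apply Nat.eq_of_mul_eq_mul_left hpos
  have h1 := Nat.multinomial_spec Finset.univ (fun i => ((τ i : Fin n) : ℕ))
  have h2 := Nat.multinomial_spec Finset.univ (fun i : Fin n => (i : ℕ))
  have hprod : ∏ i : Fin n, Nat.factorial ((τ i : Fin n) : ℕ) =
      ∏ i : Fin n, Nat.factorial (i : ℕ) := Equiv.prod_comp τ (fun i : Fin n => Nat.factorial (i : ℕ))
  have hsum : ∑ i : Fin n, ((τ i : Fin n) : ℕ) = ∑ i : Fin n, (i : ℕ) := Equiv.sum_comp τ _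
  rw [hprod] at h1
  rw [hsum] at h1
  omega

lemma detA : (∑ τ : Equiv.Perm (Fin n), (Equiv.Perm.sign τ : ℤ) * ∏ i, (A i : ℤ) ^ ((τ i : Fin n) : ℕ)) =
    ∏ i, ∏ j ∈ Finset.Ioi i, ((A j : ℤ) - (A i : ℤ)) := by
  have : (∑ τ : Equiv.Perm (Fin n), (Equiv.Perm.sign τ : ℤ) * ∏ i, (A i : ℤ) ^ ((τ i : Fin n) : ℕ)) =
      Matrix.det ((Matrix.vandermonde (fun x => (A x : ℤ))).transpose) := by
    rw [Matrix.det_apply]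
    refine Finset.sum_congr rfl fun τ _ => ?_
    simp only [Units.smul_def, zsmul_eq_mul, Matrix.transpose_apply, Matrix.vandermonde,
      Matrix.of_apply]
    norm_cast
  rw [this, Matrix.det_transpose, Matrix.det_vandermonde]

lemma Tsum_N :
    Tsum A B (∑ j ∈ Finset.range n, j) * (∏ i : Fin n, (Nat.factorial (i : ℕ) : ℤ)) =
      (Nat.factorial (∑ j ∈ Finset.range n, j) : ℤ) *
        (∏ i, ∏ j ∈ Finset.Ioi i, ((A j : ℤ) - (A i : ℤ))) *
        (∏ i, ∏ j ∈ Finset.Ioi i, ((B j : ℤ) - (B i : ℤ))) := by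
  set N := ∑ j ∈ Finset.range n, j with hN
  set VA := ∏ i, ∏ j ∈ Finset.Ioi i, ((A j : ℤ) - (A i : ℤ)) with hVA
  set VB := ∏ i, ∏ j ∈ Finset.Ioi i, ((B j : ℤ) - (B i : ℤ)) with hVB
  set K := Nat.multinomial Finset.univ (fun i : Fin n => (i : ℕ)) with hK
  rw [Tsum_eq]
  have hfilter : ∑ m ∈ Finset.piAntidiag Finset.univ N,
      (Nat.multinomial Finset.univ m : ℤ) * (∏ i, (A i : ℤ) ^ m i) *
        Matrix.det (Matrix.of fun (x j : Fin n) => (B x : ℤ) ^ m j) =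
      ∑ m ∈ (Finset.piAntidiag Finset.univ N).filter (fun m => Function.Injective m),
      (Nat.multinomial Finset.univ m : ℤ) * (∏ i, (A i : ℤ) ^ m i) *
        Matrix.det (Matrix.of fun (x j : Fin n) => (B x : ℤ) ^ m j) := by
    refine (Finset.sum_filter_of_ne fun m _ hne => ?_).symm
    by_contra hninj
    rw [det_zero_of_noninj B hninj, mul_zero] at hne
    exact hne rfl
  rw [hfilter]
  have hbij : ∑ m ∈ (Finset.piAntidiag Finset.univ N).filter (fun m => Function.Injective m),
      (Nat.multinomial Finset.univ m : ℤ) * (∏ i, (A i : ℤ) ^ m i) *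
        Matrix.det (Matrix.of fun (x j : Fin n) => (B x : ℤ) ^ m j) =
      ∑ τ : Equiv.Perm (Fin n),
        (K : ℤ) * (∏ i, (A i : ℤ) ^ ((τ i : Fin n) : ℕ)) *
          ((Equiv.Perm.sign τ : ℤ) * VB) := by
    refine (Finset.sum_bij (fun (τ : Equiv.Perm (Fin n)) _ => fun i => ((τ i : Fin n) : ℕ))
      ?_ ?_ ?_ ?_).symm
    · intro τ _
      rw [Finset.mem_filter, Finset.mem_piAntidiag]
      refine ⟨⟨?_, fun i _ => Finset.mem_univ i⟩, fun x y hxy => τ.injective (Fin.val_injective hxy)⟩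
      rw [Equiv.sum_comp τ (fun i : Fin n => (i : ℕ))]
      exact Fin.sum_univ_eq_sum_range (fun j => j) n
    · intro τ1 _ τ2 _ h
      ext i
      have := congrFun h i
      exact this
    · intro m hm
      rw [Finset.mem_filter, Finset.mem_piAntidiag] at hm
      obtain ⟨⟨hsum, -⟩, hinj⟩ := hm
      have hcard : (Finset.image m Finset.univ).card = n := by
        rw [Finset.card_image_of_injective _ hinj, Finset.card_univ, Fintype.card_fin]
      have himage : Finset.image m Finset.univ = Finset.range n := by
        refine (aux_distinct_sum n _ hcard).2 ?_
        rw [Finset.sum_image (fun a _ b _ h => hinj h)]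
        exact hsum
      have hlt : ∀ i, m i < n := by
        intro i
        have : m i ∈ Finset.image m Finset.univ := Finset.mem_image_of_mem m (Finset.mem_univ i)
        rw [himage, Finset.mem_range] at this
        exact this
      have hbij' : Function.Bijective (fun i => (⟨m i, hlt i⟩ : Fin n)) :=
        Finite.injective_iff_bijective.1 (fun x y hxy => hinj (by simpa using congrArg Fin.val hxy))
      refine ⟨Equiv.ofBijective _ hbij', Finset.mem_univ _, ?_⟩
      ext i
      rfl
    · intro τ _
      rw [multconst, detperm]
  rw [hbij]
  have : ∑ τ : Equiv.Perm (Fin n),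
        (K : ℤ) * (∏ i, (A i : ℤ) ^ ((τ i : Fin n) : ℕ)) * ((Equiv.Perm.sign τ : ℤ) * VB) =
      (K : ℤ) * VB * ∑ τ : Equiv.Perm (Fin n),
        (Equiv.Perm.sign τ : ℤ) * ∏ i, (A i : ℤ) ^ ((τ i : Fin n) : ℕ) := by
    rw [Finset.mul_sum]
    refine Finset.sum_congr rfl fun τ _ => ?_
    ring
  rw [this, detA]
  have hKfact : (∏ i : Fin n, Nat.factorial (i : ℕ)) * K = Nat.factorial N := by
    have h0 := Nat.multinomial_spec Finset.univ (fun i : Fin n => (i : ℕ))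
    have h2 : ∑ i : Fin n, (i : ℕ) = N := Fin.sum_univ_eq_sum_range (fun j => j) n
    rw [h2] at h0
    exact h0
  have : ((∏ i : Fin n, Nat.factorial (i : ℕ)) * K : ℤ) = (Nat.factorial N : ℤ) := by
    exact_mod_cast congrArg (fun x : ℕ => (x : ℤ)) hKfact
  push_cast at this
  rw [← hVA]
  linear_combination (VA * VB) * this

noncomputable def Ssum (k : ℕ) : ℤ :=
  ∑ σ : Equiv.Perm (Fin n), (Equiv.Perm.sign σ : ℤ) * (Nat.choose (eexp A B σ) k : ℤ)

lemma Lsum_eq (Q : ℚ[X]) :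
    ∑ σ : Equiv.Perm (Fin n), (Equiv.Perm.sign σ : ℚ) * Q.eval ((eexp A B σ : ℕ) : ℚ) =
      ∑ j ∈ Finset.range (Q.natDegree + 1), Q.coeff j * ((Tsum A B j : ℤ) : ℚ) := by
  have hT : ∀ j : ℕ, ((Tsum A B j : ℤ) : ℚ) =
      ∑ σ : Equiv.Perm (Fin n), (Equiv.Perm.sign σ : ℚ) * ((eexp A B σ : ℕ) : ℚ) ^ j := by
    intro j
    unfold Tsum
    push_cast
    rfl
  simp_rw [hT, Polynomial.eval_eq_sum_range, Finset.mul_sum]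
  rw [Finset.sum_comm]
  refine Finset.sum_congr rfl fun j _ => ?_
  refine Finset.sum_congr rfl fun σ _ => ?_
  ring

lemma factmul_Ssum (k : ℕ) :
    ((Nat.factorial k : ℚ)) * ((Ssum A B k : ℤ) : ℚ) =
      ∑ j ∈ Finset.range (k + 1), (descPochhammer ℚ k).coeff j * ((Tsum A B j : ℤ) : ℚ) := by
  have hL := Lsum_eq A B (descPochhammer ℚ k)
  rw [descPochhammer_natDegree ℚ k] at hL
  rw [← hL]
  unfold Ssum
  push_cast
  rw [Finset.mul_sum]
  refine Finset.sum_congr rfl fun σ _ => ?_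
  rw [descPochhammer_eval_eq_descFactorial ℚ (eexp A B σ) k]
  have : (Nat.descFactorial (eexp A B σ) k : ℚ) = (Nat.factorial k : ℚ) * (Nat.choose (eexp A B σ) k : ℚ) := by
    exact_mod_cast congrArg (fun x : ℕ => (x : ℚ)) (Nat.descFactorial_eq_factorial_mul_choose _ _)
  rw [this]
  ring

lemma Ssum_lt {k : ℕ} (hk : k < ∑ j ∈ Finset.range n, j) : Ssum A B k = 0 := by
  have h := factmul_Ssum A B k
  have hz : ∀ j ∈ Finset.range (k + 1), (descPochhammer ℚ k).coeff j * ((Tsum A B j : ℤ) : ℚ) = 0 := by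
    intro j hj
    rw [Finset.mem_range] at hj
    rw [Tsum_lt A B (by omega)]
    simp
  rw [Finset.sum_eq_zero hz] at h
  have : ((Ssum A B k : ℤ) : ℚ) = 0 := by
    rcases mul_eq_zero.1 h with h' | h'
    · exact absurd h' (by exact_mod_cast Nat.factorial_ne_zero k)
    · exact h'
  exact_mod_cast this

lemma Ssum_N :
    Ssum A B (∑ j ∈ Finset.range n, j) * (∏ i : Fin n, (Nat.factorial (i : ℕ) : ℤ)) =
      (∏ i, ∏ j ∈ Finset.Ioi i, ((A j : ℤ) - (A i : ℤ))) *
        (∏ i, ∏ j ∈ Finset.Ioi i, ((B j : ℤ) - (B i : ℤ))) := by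
  set N := ∑ j ∈ Finset.range n, j with hN
  have h := factmul_Ssum A B N
  have hsplit : ∑ j ∈ Finset.range (N + 1), (descPochhammer ℚ N).coeff j * ((Tsum A B j : ℤ) : ℚ) =
      (descPochhammer ℚ N).coeff N * ((Tsum A B N : ℤ) : ℚ) := by
    rw [Finset.sum_range_succ]
    have hz : ∀ j ∈ Finset.range N, (descPochhammer ℚ N).coeff j * ((Tsum A B j : ℤ) : ℚ) = 0 := by
      intro j hj
      rw [Finset.mem_range] at hj
      rw [Tsum_lt A B hj]
      simp
    rw [Finset.sum_eq_zero hz, zero_add]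
  have hmonic : (descPochhammer ℚ N).coeff N = 1 := by
    have h1 := monic_descPochhammer ℚ N
    have h2 := descPochhammer_natDegree ℚ N
    rw [Polynomial.Monic, Polynomial.leadingCoeff, h2] at h1
    exact h1
  rw [hsplit, hmonic, one_mul] at h
  -- h : N! * Ssum N = Tsum N  (in ℚ)
  have hT := Tsum_N A B
  rw [← hN] at hT
  have hTq : ((Tsum A B N : ℤ) : ℚ) * (∏ i : Fin n, (Nat.factorial (i : ℕ) : ℚ)) =
      (Nat.factorial N : ℚ) * (∏ i, ∏ j ∈ Finset.Ioi i, ((A j : ℚ) - (A i : ℚ))) *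
        (∏ i, ∏ j ∈ Finset.Ioi i, ((B j : ℚ) - (B i : ℚ))) := by
    exact_mod_cast congrArg (fun x : ℤ => (x : ℚ)) hT
  have goalq : ((Ssum A B N : ℤ) : ℚ) * (∏ i : Fin n, (Nat.factorial (i : ℕ) : ℚ)) =
      (∏ i, ∏ j ∈ Finset.Ioi i, ((A j : ℚ) - (A i : ℚ))) *
        (∏ i, ∏ j ∈ Finset.Ioi i, ((B j : ℚ) - (B i : ℚ))) := by
    have hfac : (Nat.factorial N : ℚ) ≠ 0 := by exact_mod_cast Nat.factorial_ne_zero N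
    refine mul_left_cancel₀ hfac ?_
    linear_combination (∏ i : Fin n, (Nat.factorial (i : ℕ) : ℚ)) * h + hTq
  exact_mod_cast goalq

theorem chebotarev {p : ℕ} (hp : p.Prime) {ω : ℂ} (hω : IsPrimitiveRoot ω p) {n : ℕ}
    (a b : Fin n → ZMod p) (ha : Function.Injective a) (hb : Function.Injective b) :
    Matrix.det (Matrix.of fun i j : Fin n => ω ^ ((a i).val * (b j).val)) ≠ 0 := by
  haveI : Fact p.Prime := ⟨hp⟩
  haveI : NeZero p := ⟨hp.ne_zero⟩
  set A : Fin n → ℕ := fun i => (a i).val with hA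
  set B : Fin n → ℕ := fun j => (b j).val with hB
  set N := ∑ j ∈ Finset.range n, j with hN
  -- n ≤ p
  have hnp : n ≤ p := by
    have := Fintype.card_le_of_injective a ha
    rwa [Fintype.card_fin, ZMod.card] at this
  -- the polynomial
  set F : Polynomial ℤ := ∑ σ : Equiv.Perm (Fin n),
    Polynomial.C ((Equiv.Perm.sign σ : ℤ)) * Polynomial.X ^ (eexp A B σ) with hF
  intro hdet
  -- aeval ω F = det
  have heval : Polynomial.aeval ω F = 0 := by
    rw [hF]
    rw [map_sum]
    have : ∀ σ : Equiv.Perm (Fin n), Polynomial.aeval ω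
        (Polynomial.C ((Equiv.Perm.sign σ : ℤ)) * Polynomial.X ^ (eexp A B σ)) =
        (Equiv.Perm.sign σ : ℤ) * ω ^ (eexp A B σ) := by
      intro σ
      simp
    rw [Finset.sum_congr rfl fun σ _ => this σ]
    rw [← Matrix.det_transpose] at hdet
    rw [Matrix.det_apply] at hdet
    rw [← hdet]
    refine Finset.sum_congr rfl fun σ _ => ?_
    rw [Units.smul_def, zsmul_eq_mul]
    congr 1
    unfold eexp
    rw [← Finset.prod_pow_eq_pow_sum]
    refine Finset.prod_congr rfl fun i _ => ?_
    simp [Matrix.transpose_apply, hA, hB]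
  -- divisibility
  have hint : IsIntegral ℤ ω := hω.isIntegral hp.pos
  have hdvd : Polynomial.cyclotomic p ℤ ∣ F := by
    rw [Polynomial.cyclotomic_eq_minpoly hω hp.pos]
    exact minpoly.isIntegrallyClosed_dvd hint heval
  obtain ⟨G, hG⟩ := hdvd
  -- compose with X + 1
  set Fc := F.comp (Polynomial.X + 1) with hFc
  have hFcoeff : ∀ k, Fc.coeff k = Ssum A B k := by
    intro k
    rw [hFc, hF, Polynomial.sum_comp]
    unfold Ssum
    rw [Polynomial.finset_sum_coeff]
    refine Finset.sum_congr rfl fun σ _ => ?_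
    rw [Polynomial.mul_comp, Polynomial.C_comp, Polynomial.pow_comp, Polynomial.X_comp,
      Polynomial.coeff_C_mul, Polynomial.coeff_X_add_one_pow]
  -- p does not divide c := Ssum A B N
  have hpz : Prime (p : ℤ) := Nat.prime_iff_prime_int.1 hp
  have hdiff : ∀ (c : Fin n → ZMod p), Function.Injective c → ∀ i : Fin n, ∀ j ∈ Finset.Ioi i,
      ¬ (p:ℤ) ∣ (((c j).val : ℤ) - ((c i).val : ℤ)) := by
    intro c hc i j hj hd
    have h0 : ((((c j).val : ℤ) - ((c i).val : ℤ) : ℤ) : ZMod p) = 0 :=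
      (ZMod.intCast_zmod_eq_zero_iff_dvd _ p).2 hd
    push_cast at h0
    rw [sub_eq_zero] at h0
    rw [ZMod.natCast_val, ZMod.natCast_val, ZMod.cast_id, ZMod.cast_id] at h0
    have := hc h0
    rw [Finset.mem_Ioi] at hj
    exact absurd this (Fin.ne_of_gt hj)
  have hVA : ¬ (p:ℤ) ∣ (∏ i, ∏ j ∈ Finset.Ioi i, ((A j : ℤ) - (A i : ℤ))) := by
    intro hd
    obtain ⟨i, -, hd⟩ := (hpz.dvd_finset_prod_iff _).1 hd
    obtain ⟨j, hj, hd⟩ := (hpz.dvd_finset_prod_iff _).1 hd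
    exact hdiff a ha i j hj hd
  have hVB : ¬ (p:ℤ) ∣ (∏ i, ∏ j ∈ Finset.Ioi i, ((B j : ℤ) - (B i : ℤ))) := by
    intro hd
    obtain ⟨i, -, hd⟩ := (hpz.dvd_finset_prod_iff _).1 hd
    obtain ⟨j, hj, hd⟩ := (hpz.dvd_finset_prod_iff _).1 hd
    exact hdiff b hb i j hj hd
  have hpc : ¬ (p:ℤ) ∣ Ssum A B N := by
    intro hd
    have hd2 : (p:ℤ) ∣ Ssum A B N * (∏ i : Fin n, (Nat.factorial (i : ℕ) : ℤ)) :=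
      Dvd.dvd.mul_right hd _
    rw [Ssum_N A B] at hd2
    rcases hpz.dvd_mul.1 hd2 with h | h
    · exact hVA h
    · exact hVB h
  -- trailing degree argument
  have hFcN : Fc.coeff N = Ssum A B N := hFcoeff N
  have hcne : Ssum A B N ≠ 0 := fun h => hpc (h ▸ dvd_zero _)
  have hFc0 : Fc ≠ 0 := fun h => hcne (by rw [← hFcN, h, Polynomial.coeff_zero])
  have hlow : ∀ k < N, Fc.coeff k = 0 := fun k hk => (hFcoeff k).trans (Ssum_lt A B hk)
  have htd : Fc.natTrailingDegree = N :=
    le_antisymm (Polynomial.natTrailingDegree_le_of_ne_zero (by rw [hFcN]; exact hcne))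
      (Polynomial.le_natTrailingDegree hFc0 hlow)
  have htc : Fc.trailingCoeff = Ssum A B N := by
    rw [Polynomial.trailingCoeff, htd, hFcN]
  set Pc := (Polynomial.cyclotomic p ℤ).comp (Polynomial.X + 1) with hPc
  set Gc := G.comp (Polynomial.X + 1) with hGc
  have hFcPG : Fc = Pc * Gc := by
    rw [hFc, hG]
    exact Polynomial.mul_comp _ _ _
  have hPc0 : Pc.coeff 0 = (p : ℤ) := by
    rw [Polynomial.coeff_zero_eq_eval_zero, hPc, Polynomial.eval_comp]
    simp [Polynomial.eval_one_cyclotomic_prime]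
  have hPtd : Pc.natTrailingDegree = 0 :=
    Polynomial.natTrailingDegree_eq_zero.2 (Or.inr (by rw [hPc0]; exact_mod_cast hp.ne_zero))
  have hPtc : Pc.trailingCoeff = (p : ℤ) := by
    rw [Polynomial.trailingCoeff, hPtd, hPc0]
  have := Polynomial.trailingCoeff_mul Pc Gc
  rw [← hFcPG, htc, hPtc] at this
  exact hpc ⟨Gc.trailingCoeff, this⟩

open Complex

noncomputable def dft {p : ℕ} [NeZero p] (f : ZMod p → ℂ) (ξ : ZMod p) : ℂ :=
  (p : ℂ)⁻¹ * ∑ x : ZMod p, f x * Complex.exp (-2 * Real.pi * Complex.I * ((x.val : ℂ) * (ξ.val : ℂ)) / p)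

namespace DFTaux

variable {p : ℕ} [NeZero p]

noncomputable def om (p : ℕ) : ℂ := Complex.exp (-(2 * Real.pi * Complex.I / p))

lemma om_primitive (p : ℕ) (hp : p ≠ 0) : IsPrimitiveRoot (om p) p := by
  have h := Complex.isPrimitiveRoot_exp p hp
  have : om p = (Complex.exp (2 * Real.pi * Complex.I / p))⁻¹ := by
    rw [om, Complex.exp_neg]
  rw [this]
  exact h.inv

lemma dft_eq (f : ZMod p → ℂ) (ξ : ZMod p) :
    dft f ξ = (p : ℂ)⁻¹ * ∑ x : ZMod p, f x * om p ^ (x.val * ξ.val) := by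
  unfold dft om
  congr 1
  refine Finset.sum_congr rfl fun x _ => ?_
  congr 1
  rw [← Complex.exp_nat_mul]
  congr 1
  push_cast
  ring

lemma dft_add (f g : ZMod p → ℂ) : dft (f + g) = dft f + dft g := by
  funext ξ
  simp only [dft, Pi.add_apply]
  rw [← mul_add, ← Finset.sum_add_distrib]
  congr 1
  refine Finset.sum_congr rfl fun x _ => ?_
  ring

lemma dft_smul (c : ℂ) (f : ZMod p → ℂ) : dft (c • f) = c • dft f := by
  funext ξ
  simp only [dft, Pi.smul_apply, smul_eq_mul]
  rw [Finset.mul_sum, Finset.mul_sum, Finset.mul_sum]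
  refine Finset.sum_congr rfl fun x _ => ?_
  ring

end DFTaux

open DFTaux

theorem uncertainty {p : ℕ} (hp : p.Prime) [NeZero p] (f : ZMod p → ℂ) (hf : f ≠ 0) :
    p + 1 ≤ (Function.support f).ncard + (Function.support (dft f)).ncard := by
  classical
  by_contra hcon
  push_neg at hcon
  set S : Finset (ZMod p) := (Set.toFinite (Function.support f)).toFinset with hS
  set T : Finset (ZMod p) := (Set.toFinite (Function.support (dft f))).toFinset with hT
  have hScard : (Function.support f).ncard = S.card := Set.ncard_eq_toFinset_card _ _
  have hTcard : (Function.support (dft f)).ncard = T.card := Set.ncard_eq_toFinset_card _ _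
  rw [hScard, hTcard] at hcon
  have hTc : S.card ≤ Tᶜ.card := by
    rw [Finset.card_compl]
    have : T.card ≤ Fintype.card (ZMod p) := Finset.card_le_card (Finset.subset_univ T)
    rw [ZMod.card] at *
    omega
  obtain ⟨U, hU, hUcard⟩ := Finset.exists_subset_card_eq hTc
  set k := S.card with hk
  have hUk : U.card = k := hUcard
  -- enumerate
  have hkS : S.card = k := rfl
  set ea : Fin k ≃ ↥S := (S.equivFin.trans (finCongr hkS)).symm with hea
  set eb : Fin k ≃ ↥U := (U.equivFin.trans (finCongr hUk)).symm with heb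
  set a : Fin k → ZMod p := fun i => (ea i : ZMod p) with ha
  set b : Fin k → ZMod p := fun i => (eb i : ZMod p) with hb
  have hainj : Function.Injective a :=
    fun i j hij => ea.injective (Subtype.coe_injective hij)
  have hbinj : Function.Injective b :=
    fun i j hij => eb.injective (Subtype.coe_injective hij)
  have haS : ∀ i, a i ∈ S := fun i => (ea i).2
  have hbU : ∀ i, b i ∈ U := fun i => (eb i).2
  have hω := om_primitive p hp.ne_zero
  set M : Matrix (Fin k) (Fin k) ℂ := Matrix.of fun i j => om p ^ ((b i).val * (a j).val) with hM
  have hdet : M.det ≠ 0 := chebotarev hp hω b a hbinj hainj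
  set v : Fin k → ℂ := fun j => f (a j) with hv
  have hMv : M.mulVec v = 0 := by
    funext i
    have hbi : dft f (b i) = 0 := by
      have : b i ∉ T := fun hmem => (Finset.mem_compl.1 (hU (hbU i))) hmem
      rw [hT, Set.Finite.mem_toFinset, Function.mem_support, not_not] at this
      exact this
    rw [dft_eq] at hbi
    have hpne : (p : ℂ)⁻¹ ≠ 0 := by
      simp [Nat.cast_ne_zero.2 hp.ne_zero]
    have hsum0 : ∑ x : ZMod p, f x * om p ^ (x.val * (b i).val) = 0 := by
      rcases mul_eq_zero.1 hbi with h | h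
      · exact absurd h hpne
      · exact h
    have hsumS : ∑ x ∈ S, f x * om p ^ (x.val * (b i).val) = 0 := by
      rw [← hsum0]
      refine Finset.sum_subset (Finset.subset_univ S) fun x _ hx => ?_
      have hfx : f x = 0 := by
        rw [hS, Set.Finite.mem_toFinset, Function.mem_support, not_not] at hx
        exact hx
      rw [hfx, zero_mul]
    have hsumF : ∑ j : Fin k, f (a j) * om p ^ ((a j).val * (b i).val) = 0 := by
      rw [← hsumS]
      refine Finset.sum_bij (fun j _ => a j) (fun j _ => haS j) ?_ ?_ ?_
      · intro x _ y _ hxy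
        exact hainj hxy
      · intro x hx
        obtain ⟨j, hj⟩ := ea.surjective ⟨x, hx⟩
        exact ⟨j, Finset.mem_univ j, congrArg Subtype.val hj⟩
      · intro j _
        rfl
    rw [Matrix.mulVec, Pi.zero_apply]
    rw [← hsumF]
    unfold dotProduct
    refine Finset.sum_congr rfl fun j _ => ?_
    rw [hM, hv]
    simp only [Matrix.of_apply]
    rw [Nat.mul_comm]
    ring
  have hv0 : v = 0 := Matrix.eq_zero_of_mulVec_eq_zero hdet hMv
  -- contradiction: S nonempty
  have hSne : S.Nonempty := by
    rw [hS]
    rw [Set.Finite.toFinset_nonempty]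
    exact Function.support_nonempty_iff.2 hf
  obtain ⟨x, hx⟩ := hSne
  obtain ⟨j, hj⟩ := ea.surjective ⟨x, hx⟩
  have : f x ≠ 0 := by
    rw [hS, Set.Finite.mem_toFinset, Function.mem_support] at hx
    exact hx
  apply this
  have h0 := congrFun hv0 j
  have : a j = x := congrArg Subtype.val hj
  rw [hv] at h0
  simp only [this] at h0
  exact h0

-- avoiding finitely many hyperplanes
lemma exists_forall_ne_zero {ι V : Type*} [AddCommGroup V] [Module ℂ V] (s : Finset ι)
    (φ : ι → (V →ₗ[ℂ] ℂ)) (h : ∀ i ∈ s, ∃ v, φ i v ≠ 0) : ∃ v, ∀ i ∈ s, φ i v ≠ 0 := by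
  classical
  induction s using Finset.induction_on with
  | empty => exact ⟨0, by simp⟩
  | @insert a t hat ih =>
    obtain ⟨v, hv⟩ := ih (fun i hi => h i (Finset.mem_insert_of_mem hi))
    obtain ⟨w, hw⟩ := h a (Finset.mem_insert_self a t)
    set bad : Finset ℂ := (insert a t).image (fun i => -(φ i v) / (φ i w)) with hbad
    obtain ⟨c, hc⟩ := Infinite.exists_notMem_finset bad
    refine ⟨v + c • w, fun i hi => ?_⟩
    have key : φ i w ≠ 0 → φ i (v + c • w) ≠ 0 := by
      intro hiw h0
      rw [map_add, map_smul, smul_eq_mul] at h0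
      have : c = -(φ i v) / (φ i w) := by
        field_simp
        linear_combination h0
      exact hc (by rw [hbad]; exact Finset.mem_image.2 ⟨i, hi, this.symm⟩)
    rcases Finset.mem_insert.1 hi with rfl | hit
    · exact key hw
    · by_cases hiw : φ i w = 0
      · rw [map_add, map_smul, smul_eq_mul, hiw, mul_zero, add_zero]
        exact hv i hit
      · exact key hiw

lemma exists_subset_mem {X : Type*} [DecidableEq X] (s : Finset X) (a : X) (ha : a ∈ s)
    (k : ℕ) (h1 : 1 ≤ k) (hk : k ≤ s.card) : ∃ t ⊆ s, a ∈ t ∧ t.card = k := by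
  have herase : k - 1 ≤ (s.erase a).card := by
    rw [Finset.card_erase_of_mem ha]; omega
  obtain ⟨u, hu, hucard⟩ := Finset.exists_subset_card_eq herase
  refine ⟨insert a u, ?_, Finset.mem_insert_self a u, ?_⟩
  · intro x hx
    rcases Finset.mem_insert.1 hx with rfl | hxu
    · exact ha
    · exact Finset.erase_subset a s (hu hxu)
  · rw [Finset.card_insert_of_notMem (fun hau => Finset.notMem_erase a s (hu hau)), hucard]
    omega

lemma exists_good {p : ℕ} (hp : p.Prime) [NeZero p] (A B : Set (ZMod p))
    (hcard : A.ncard + B.ncard ≥ p + 1) {a b : ZMod p} (ha : a ∈ A) (hb : b ∈ B) :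
    ∃ f : ZMod p → ℂ, (∀ x ∉ A, f x = 0) ∧ (∀ ξ ∉ B, dft f ξ = 0) ∧ f a ≠ 0 ∧ dft f b ≠ 0 := by
  classical
  set At := (Set.toFinite A).toFinset with hAt
  set Bt := (Set.toFinite B).toFinset with hBt
  have hAcard : A.ncard = At.card := Set.ncard_eq_toFinset_card _ _
  have hBcard : B.ncard = Bt.card := Set.ncard_eq_toFinset_card _ _
  have haAt : a ∈ At := (Set.Finite.mem_toFinset _).2 ha
  have hbBt : b ∈ Bt := (Set.Finite.mem_toFinset _).2 hb
  set α := At.card with hα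
  set β := Bt.card with hβ
  have hα1 : 1 ≤ α := Finset.card_pos.2 ⟨a, haAt⟩
  have hβ1 : 1 ≤ β := Finset.card_pos.2 ⟨b, hbBt⟩
  have hαp : α ≤ p := by
    have := Finset.card_le_card (Finset.subset_univ At)
    rwa [Finset.card_univ, ZMod.card] at this
  have hβp : β ≤ p := by
    have := Finset.card_le_card (Finset.subset_univ Bt)
    rwa [Finset.card_univ, ZMod.card] at this
  have hsum : α + β ≥ p + 1 := by rw [hAcard, hBcard] at hcard; exact hcard
  set k := max 1 (p + 1 - β) with hkdef
  have hk1 : 1 ≤ k := le_max_left _ _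
  have hkα : k ≤ α := by omega
  have hkp : k ≤ p := by omega
  have hkB : p + 1 - k ≤ β := by omega
  have hkB1 : 1 ≤ p + 1 - k := by omega
  obtain ⟨A', hA'sub, haA', hA'card⟩ := exists_subset_mem At a haAt k hk1 hkα
  obtain ⟨B', hB'sub, hbB', hB'card⟩ := exists_subset_mem Bt b hbBt (p + 1 - k) hkB1 hkB
  -- the linear map
  set T : ((↥A' → ℂ) →ₗ[ℂ] (↥(B'ᶜ) → ℂ)) :=
    { toFun := fun g ξ => ∑ x : ↥A', g x * om p ^ ((x : ZMod p).val * (ξ : ZMod p).val)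
      map_add' := by
        intro g1 g2
        funext ξ
        simp only [Pi.add_apply]
        rw [← Finset.sum_add_distrib]
        exact Finset.sum_congr rfl fun x _ => by ring
      map_smul' := by
        intro c g
        funext ξ
        simp only [Pi.smul_apply, smul_eq_mul, RingHom.id_apply]
        rw [Finset.mul_sum]
        exact Finset.sum_congr rfl fun x _ => by ring } with hT
  have hcards : Fintype.card ↥(B'ᶜ : Finset (ZMod p)) < Fintype.card ↥A' := by
    rw [Fintype.card_coe, Fintype.card_coe, Finset.card_compl, ZMod.card, hA'card, hB'card]
    omega
  have hni : ¬ Function.Injective T := by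
    intro hinj
    have := LinearMap.finrank_le_finrank_of_injective hinj
    rw [Module.finrank_pi ℂ, Module.finrank_pi ℂ] at this
    omega
  rw [Function.not_injective_iff] at hni
  obtain ⟨g1, g2, hg12, hgne⟩ := hni
  set g : ↥A' → ℂ := g1 - g2 with hg
  have hgz : T g = 0 := by rw [hg, map_sub, hg12, sub_self]
  have hgnz : g ≠ 0 := sub_ne_zero.2 hgne
  -- the function
  set f : ZMod p → ℂ := fun x => if h : x ∈ A' then g ⟨x, h⟩ else 0 with hf
  have hsuppA : Function.support f ⊆ (A' : Set (ZMod p)) := by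
    intro x hx
    rw [Function.mem_support] at hx
    by_contra hxA
    rw [Finset.mem_coe] at hxA
    exact hx (by simp only [hf]; exact dif_neg hxA)
  have hdftval : ∀ ξ : ZMod p, dft f ξ =
      (p : ℂ)⁻¹ * ∑ x : ↥A', g x * om p ^ ((x : ZMod p).val * ξ.val) := by
    intro ξ
    have e1 : ∑ x : ↥A', g x * om p ^ ((x : ZMod p).val * ξ.val)
        = ∑ x ∈ A', f x * om p ^ (x.val * ξ.val) := by
      rw [← Finset.sum_coe_sort A' (fun x => f x * om p ^ (x.val * ξ.val))]
      refine Finset.sum_congr rfl fun x _ => ?_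
      have hfx : f (x : ZMod p) = g x := by
        simp only [hf]
        rw [dif_pos x.2]
      rw [hfx]
    rw [dft_eq, e1]
    congr 1
    refine (Finset.sum_subset (Finset.subset_univ A') fun x _ hx => ?_).symm
    have hfx : f x = 0 := by simp only [hf]; exact dif_neg hx
    rw [hfx, zero_mul]
  have hdft0 : ∀ ξ : ZMod p, ξ ∉ B' → dft f ξ = 0 := by
    intro ξ hξ
    rw [hdftval ξ]
    have : (⟨ξ, Finset.mem_compl.2 hξ⟩ : ↥(B'ᶜ)) = ⟨ξ, Finset.mem_compl.2 hξ⟩ := rfl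
    have h0 := congrFun hgz ⟨ξ, Finset.mem_compl.2 hξ⟩
    rw [hT] at h0
    simp only [LinearMap.coe_mk, AddHom.coe_mk, Pi.zero_apply] at h0
    rw [h0, mul_zero]
  have hsuppB : Function.support (dft f) ⊆ (B' : Set (ZMod p)) := by
    intro ξ hξ
    rw [Function.mem_support] at hξ
    by_contra hξB
    rw [Finset.mem_coe] at hξB
    exact hξ (hdft0 ξ hξB)
  -- f nonzero
  have hfne : f ≠ 0 := by
    obtain ⟨x0, hx0⟩ := Function.ne_iff.1 hgnz
    intro h0
    apply hx0
    have h1 := congrFun h0 (x0 : ZMod p)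
    simp only [hf, Pi.zero_apply] at h1
    rw [dif_pos x0.2] at h1
    simpa using h1
  -- uncertainty
  have hunc := uncertainty hp f hfne
  have hfA : (Function.support f).ncard ≤ k := by
    have := Set.ncard_le_ncard hsuppA (Set.toFinite _)
    rwa [Set.ncard_coe_finset, hA'card] at this
  have hfB : (Function.support (dft f)).ncard ≤ p + 1 - k := by
    have := Set.ncard_le_ncard hsuppB (Set.toFinite _)
    rwa [Set.ncard_coe_finset, hB'card] at this
  have heqA : Function.support f = (A' : Set (ZMod p)) := by
    refine (Set.eq_of_subset_of_ncard_le hsuppA ?_ (Set.toFinite _)).symm.symm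
    rw [Set.ncard_coe_finset, hA'card]
    omega
  have heqB : Function.support (dft f) = (B' : Set (ZMod p)) := by
    refine Set.eq_of_subset_of_ncard_le hsuppB ?_ (Set.toFinite _)
    rw [Set.ncard_coe_finset, hB'card]
    omega
  refine ⟨f, ?_, ?_, ?_, ?_⟩
  · intro x hx
    simp only [hf]
    refine dif_neg fun hxA' => hx ?_
    have := hA'sub hxA'
    rwa [Set.Finite.mem_toFinset] at this
  · intro ξ hξ
    refine hdft0 ξ fun hξB' => hξ ?_
    have := hB'sub hξB'
    rwa [Set.Finite.mem_toFinset] at this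
  · have : a ∈ Function.support f := by rw [heqA, Finset.mem_coe]; exact haA'
    rwa [Function.mem_support] at this
  · have : b ∈ Function.support (dft f) := by rw [heqB, Finset.mem_coe]; exact hbB'
    rwa [Function.mem_support] at this

theorem uncertainty_converse
    (p : ℕ) (hp : p.Prime) [NeZero p]
    (A B : Set (ZMod p)) (hA : A.Nonempty) (hB : B.Nonempty)
    (hcard : A.ncard + B.ncard ≥ p + 1) :
    ∃ f : ZMod p → ℂ, Function.support f = A ∧ Function.support (dft f) = B := by
  classical
  obtain ⟨a0, ha0⟩ := hA
  obtain ⟨b0, hb0⟩ := hB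
  set W : Submodule ℂ (ZMod p → ℂ) :=
    { carrier := {f | (∀ x ∉ A, f x = 0) ∧ ∀ ξ ∉ B, dft f ξ = 0}
      add_mem' := by
        rintro f g ⟨hf1, hf2⟩ ⟨hg1, hg2⟩
        constructor
        · intro x hx
          simp [hf1 x hx, hg1 x hx]
        · intro ξ hξ
          rw [dft_add]
          simp [hf2 ξ hξ, hg2 ξ hξ]
      zero_mem' := by
        constructor
        · intro x _
          rfl
        · intro ξ _
          have : dft (0 : ZMod p → ℂ) ξ = 0 := by
            simp [dft]
          exact this
      smul_mem' := by
        rintro c f ⟨hf1, hf2⟩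
        constructor
        · intro x hx
          simp [hf1 x hx]
        · intro ξ hξ
          rw [dft_smul]
          simp [hf2 ξ hξ] } with hW
  set φ : (ZMod p ⊕ ZMod p) → (↥W →ₗ[ℂ] ℂ) := fun i =>
    Sum.elim
      (fun x => { toFun := fun f => (f : ZMod p → ℂ) x
                  map_add' := fun f g => rfl
                  map_smul' := fun c f => rfl })
      (fun ξ => { toFun := fun f => dft (f : ZMod p → ℂ) ξ
                  map_add' := fun f g => by
                    have := congrFun (dft_add (f : ZMod p → ℂ) (g : ZMod p → ℂ)) ξ
                    simpa using this
                  map_smul' := fun c f => by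
                    have := congrFun (dft_smul c (f : ZMod p → ℂ)) ξ
                    simpa using this }) i with hφ
  set At := (Set.toFinite A).toFinset with hAt
  set Bt := (Set.toFinite B).toFinset with hBt
  set s : Finset (ZMod p ⊕ ZMod p) := At.disjSum Bt with hs
  have hexist : ∀ i ∈ s, ∃ v : ↥W, φ i v ≠ 0 := by
    intro i hi
    rw [hs, Finset.mem_disjSum] at hi
    rcases hi with ⟨x, hx, rfl⟩ | ⟨ξ, hξ, rfl⟩
    · rw [Set.Finite.mem_toFinset] at hx
      obtain ⟨f, h1, h2, h3, h4⟩ := exists_good hp A B hcard hx hb0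
      exact ⟨⟨f, h1, h2⟩, h3⟩
    · rw [Set.Finite.mem_toFinset] at hξ
      obtain ⟨f, h1, h2, h3, h4⟩ := exists_good hp A B hcard ha0 hξ
      exact ⟨⟨f, h1, h2⟩, h4⟩
  obtain ⟨v, hv⟩ := exists_forall_ne_zero s φ hexist
  refine ⟨(v : ZMod p → ℂ), ?_, ?_⟩
  · ext x
    constructor
    · intro hx
      rw [Function.mem_support] at hx
      by_contra hxA
      exact hx (v.2.1 x hxA)
    · intro hx
      rw [Function.mem_support]
      have hmem : Sum.inl x ∈ s := by
        rw [hs]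
        exact Finset.inl_mem_disjSum.2 ((Set.Finite.mem_toFinset _).2 hx)
      exact hv (Sum.inl x) hmem
  · ext ξ
    constructor
    · intro hξ
      rw [Function.mem_support] at hξ
      by_contra hξB
      exact hξ (v.2.2 ξ hξB)
    · intro hξ
      rw [Function.mem_support]
      have hmem : Sum.inr ξ ∈ s := by
        rw [hs]
        exact Finset.inr_mem_disjSum.2 ((Set.Finite.mem_toFinset _).2 hξ)
      exact hv (Sum.inr ξ) hmem
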